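/- In a live-path graph with fixed negative seed set N₀, the influence blocking set is monotone: for any set S and any vertex u ∉ S ∪ N₀, IBS(S) ⊆ IBS(S ∪ {u}). -/
import Mathlib


variable {V : Type*}

/-- There is a walk of length `n` (number of edges) from `u` to `w` along relation `E`. -/
inductive PathLen (E : V → V → Prop) : V → V → ℕ → Prop
  | refl (v : V) : PathLen E v v 0
  | tail {u v w : V} {n : ℕ} : PathLen E u v n → E v w → PathLen E u w (n + 1)

/-- Shortest-path distance (number of edges) from the set `S` to `v` along edges `E`,
`⊤` if no path exists. -/
noncomputable def eDist (E : V → V → Prop) (S : Set V) (v : V) : ℕ∞ :=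
  sInf {n : ℕ∞ | ∃ m : ℕ, n = (m : ℕ∞) ∧ ∃ s ∈ S, PathLen E s v m}

/-- An edge relation is "live-path" if every vertex has at most one in-edge. -/
def LivePathRel (E : V → V → Prop) : Prop :=
  ∀ ⦃u u' v : V⦄, E u v → E u' v → u = u'

/-- `l` is a path (list of successive vertices) along `E` from `s` to `v`. -/
def IsPathFrom (E : V → V → Prop) (l : List V) (s v : V) : Prop :=
  l.Chain' E ∧ l.head? = some s ∧ l.getLast? = some v

/-- `l` is a shortest path along `E` from the set `S` to `v`:
it starts at some node of `S`, ends at `v`, and its number of edges equals `eDist E S v`. -/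
def IsShortestPath (E : V → V → Prop) (S : Set V) (v : V) (l : List V) : Prop :=
  (∃ s ∈ S, IsPathFrom E l s v) ∧ (l.length : ℕ∞) = eDist E S v + 1

/-- `v` is negatively activated (-active) under positive seeds `S` and negative seeds `N₀`. -/
def NegActive (pos neg : V → V → Prop) (N₀ S : Set V) (v : V) : Prop :=
  eDist neg N₀ v < ⊤ ∧ eDist neg N₀ v ≤ eDist pos S v

/-- Influence blocking set: vertices -active with empty positive seed set
but not -active with positive seed set `S`. -/
def IBS (pos neg : V → V → Prop) (N₀ S : Set V) : Set V :=
  {v | NegActive pos neg N₀ ∅ v ∧ ¬ NegActive pos neg N₀ S v}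

lemma eDist_anti (E : V → V → Prop) {S T : Set V} (hST : S ⊆ T) (v : V) :
    eDist E T v ≤ eDist E S v := by
  apply sInf_le_sInf
  rintro n ⟨m, rfl, s, hs, hp⟩
  exact ⟨m, rfl, s, hST hs, hp⟩

/-- Monotonicity of the influence blocking set: for `u ∉ S ∪ N₀`,
`IBS(S) ⊆ IBS(S ∪ {u})`. -/
theorem stmt4 (pos neg : V → V → Prop)
    (hpos : LivePathRel pos) (hneg : LivePathRel neg)
    (N₀ S : Set V) (u : V) (hu : u ∉ S ∪ N₀) :
    IBS pos neg N₀ S ⊆ IBS pos neg N₀ (S ∪ {u}) := by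
  intro v hv
  obtain ⟨h1, h2⟩ := hv
  refine ⟨h1, fun h3 => h2 ?_⟩
  refine ⟨h3.1, le_trans h3.2 ?_⟩
  exact eDist_anti pos (Set.subset_union_left) v
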